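/- Let H and K be complex inner product spaces with dim(H) ≥ 2, and let T : H → K be a real-linear isometry preserving orthogonality. Then the following statements are equivalent: (a) T is neither complex-linear nor conjugate-linear; (b) for every non-zero z ∈ H, T(i z) ∉ {i T(z), -i T(z)}; (c) there exists a non-zero z ∈ H with T(i z) ∉ {i T(z), -i T(z)}; (d) there exists a non-zero x₀ ∈ H such that i T(x₀) ∉ T(H). -/

import Mathlib

open scoped ComplexInnerProductSpace

open scoped ComplexInnerProductSpace
open Complex

namespace CharNCLAux

variable {H K : Type*} [NormedAddCommGroup H] [InnerProductSpace ℂ H]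
    [NormedAddCommGroup K] [InnerProductSpace ℂ K] {T : H → K}

theorem norm_sq_c (c : ℂ) : ‖c‖ ^ 2 = c.re ^ 2 + c.im ^ 2 := by
  rw [Complex.sq_norm, Complex.normSq_apply]; ring

theorem smul_decompC (c : ℂ) (x : H) :
    c • x = (c.re : ℂ) • x + (c.im : ℂ) • (Complex.I • x) := by
  rw [smul_smul, ← add_smul]
  congr 1
  simp [Complex.ext_iff]

theorem map_zero' (hsmul : ∀ (r : ℝ) (x : H), T (r • x) = r • T x) : T 0 = 0 := by
  simpa using hsmul 0 0

theorem map_neg' (hsmul : ∀ (r : ℝ) (x : H), T (r • x) = r • T x) (x : H) :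
    T (-x) = - T x := by
  simpa using hsmul (-1) x

theorem map_sub' (hadd : ∀ x y, T (x + y) = T x + T y)
    (hsmul : ∀ (r : ℝ) (x : H), T (r • x) = r • T x) (x y : H) :
    T (x - y) = T x - T y := by
  rw [sub_eq_add_neg, hadd, map_neg' hsmul, sub_eq_add_neg]

theorem mapC (hadd : ∀ x y, T (x + y) = T x + T y)
    (hsmul : ∀ (r : ℝ) (x : H), T (r • x) = r • T x) (c : ℂ) (x : H) :
    T (c • x) = (c.re : ℂ) • T x + (c.im : ℂ) • T (Complex.I • x) := by
  rw [smul_decompC c x, Complex.coe_smul, Complex.coe_smul, hadd, hsmul, hsmul,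
    ← Complex.coe_smul, ← Complex.coe_smul]

theorem re_eq (hadd : ∀ x y, T (x + y) = T x + T y) (hiso : ∀ x, ‖T x‖ = ‖x‖) (x y : H) :
    (⟪T x, T y⟫ : ℂ).re = (⟪x, y⟫ : ℂ).re := by
  have h1 := norm_add_sq (𝕜 := ℂ) (T x) (T y)
  have h2 := norm_add_sq (𝕜 := ℂ) x y
  rw [← hadd, hiso, hiso, hiso] at h1
  simp only [RCLike.re_to_complex] at h1 h2
  linarith

noncomputable def nu (T : H → K) (z : H) : ℝ := (⟪T z, T (Complex.I • z)⟫ : ℂ).im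

theorem nu_smul (hadd : ∀ x y, T (x + y) = T x + T y)
    (hsmul : ∀ (r : ℝ) (x : H), T (r • x) = r • T x) (c : ℂ) (z : H) :
    nu T (c • z) = (c.re ^ 2 + c.im ^ 2) * nu T z := by
  have hUV : (⟪T (Complex.I • z), T z⟫ : ℂ).im = -(⟪T z, T (Complex.I • z)⟫ : ℂ).im := by
    conv_lhs => rw [← inner_conj_symm (T (Complex.I • z)) (T z)]
    exact Complex.conj_im _
  have hUU : (⟪T z, T z⟫ : ℂ).im = 0 := inner_self_im (𝕜 := ℂ) _
  have hVV : (⟪T (Complex.I • z), T (Complex.I • z)⟫ : ℂ).im = 0 := inner_self_im (𝕜 := ℂ) _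
  unfold nu
  rw [show Complex.I • (c • z) = (Complex.I * c) • z from smul_smul _ _ _,
      mapC hadd hsmul c z, mapC hadd hsmul (Complex.I * c) z]
  simp only [inner_add_left, inner_add_right, inner_smul_left, inner_smul_right,
    Complex.conj_ofReal, Complex.add_im, Complex.mul_im, Complex.mul_re,
    Complex.ofReal_re, Complex.ofReal_im, Complex.I_re, Complex.I_im, hUU, hVV]
  rw [hUV]
  ring

theorem nu_smul_real (hadd : ∀ x y, T (x + y) = T x + T y)
    (hsmul : ∀ (r : ℝ) (x : H), T (r • x) = r • T x) (r : ℝ) (z : H) :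
    nu T (r • z) = r ^ 2 * nu T z := by
  rw [← Complex.coe_smul, nu_smul hadd hsmul]
  simp

theorem cross_zero (hop : ∀ x y : H, ⟪x, y⟫ = 0 → ⟪T x, T y⟫ = 0)
    {z w : H} (hzw : ⟪z, w⟫ = 0) : ⟪T z, T (Complex.I • w)⟫ = 0 :=
  hop _ _ (by rw [inner_smul_right, hzw, mul_zero])

theorem inner_symm_zero {z w : H} (hzw : ⟪z, w⟫ = 0) : ⟪w, z⟫ = 0 := by
  rw [← inner_conj_symm, hzw, map_zero]

theorem nu_add_orth (hadd : ∀ x y, T (x + y) = T x + T y)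
    (hop : ∀ x y : H, ⟪x, y⟫ = 0 → ⟪T x, T y⟫ = 0)
    {z w : H} (hzw : ⟪z, w⟫ = 0) :
    nu T (z + w) = nu T z + nu T w := by
  have h1 : ⟪T z, T (Complex.I • w)⟫ = 0 := cross_zero hop hzw
  have h2 : ⟪T w, T (Complex.I • z)⟫ = 0 := cross_zero hop (inner_symm_zero hzw)
  unfold nu
  rw [smul_add, hadd, hadd, inner_add_left, inner_add_right, inner_add_right, h1, h2]
  simp

theorem nu_orth_eq_of_norm_eq (hadd : ∀ x y, T (x + y) = T x + T y)
    (hsmul : ∀ (r : ℝ) (x : H), T (r • x) = r • T x)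
    (hop : ∀ x y : H, ⟪x, y⟫ = 0 → ⟪T x, T y⟫ = 0)
    {z w : H} (hzw : ⟪z, w⟫ = 0) (hnorm : ‖z‖ = ‖w‖) :
    nu T z = nu T w := by
  have horth : ⟪z + w, Complex.I • z - Complex.I • w⟫ = 0 := by
    rw [inner_sub_right, inner_add_left, inner_add_left, inner_smul_right, inner_smul_right,
      inner_smul_right, inner_smul_right, hzw, inner_symm_zero hzw,
      inner_self_eq_norm_sq_to_K, inner_self_eq_norm_sq_to_K, hnorm]
    ring
  have h0 := hop _ _ horth
  rw [hadd, map_sub' hadd hsmul] at h0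
  rw [inner_sub_right, inner_add_left, inner_add_left] at h0
  rw [cross_zero hop (inner_symm_zero hzw), cross_zero hop hzw] at h0
  have h : (⟪T z, T (Complex.I • z)⟫ : ℂ) = ⟪T w, T (Complex.I • w)⟫ := by
    linear_combination h0
  unfold nu
  rw [h]

theorem mu_orth (hadd : ∀ x y, T (x + y) = T x + T y)
    (hsmul : ∀ (r : ℝ) (x : H), T (r • x) = r • T x)
    (hop : ∀ x y : H, ⟪x, y⟫ = 0 → ⟪T x, T y⟫ = 0)
    {z w : H} (hz : z ≠ 0) (hw : w ≠ 0) (hzw : ⟪z, w⟫ = 0) :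
    nu T z * ‖w‖ ^ 2 = nu T w * ‖z‖ ^ 2 := by
  have hzn : ‖z‖ ≠ 0 := norm_ne_zero_iff.mpr hz
  have hwn : ‖w‖ ≠ 0 := norm_ne_zero_iff.mpr hw
  set r : ℝ := ‖z‖ / ‖w‖ with hr
  have h1 : ⟪z, r • w⟫ = 0 := by
    rw [← Complex.coe_smul, inner_smul_right, hzw, mul_zero]
  have hnorm : ‖z‖ = ‖r • w‖ := by
    rw [norm_smul, hr]
    rw [Real.norm_eq_abs, _root_.abs_of_nonneg (by positivity)]
    field_simp
  have h2 := nu_orth_eq_of_norm_eq hadd hsmul hop h1 hnorm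
  rw [nu_smul_real hadd hsmul] at h2
  rw [h2, hr]
  field_simp

theorem mu_const (hadd : ∀ x y, T (x + y) = T x + T y)
    (hsmul : ∀ (r : ℝ) (x : H), T (r • x) = r • T x)
    (hop : ∀ x y : H, ⟪x, y⟫ = 0 → ⟪T x, T y⟫ = 0)
    {z w : H} (hz : z ≠ 0) (hw : w ≠ 0) :
    nu T z * ‖w‖ ^ 2 = nu T w * ‖z‖ ^ 2 := by
  have hzn : ‖z‖ ≠ 0 := norm_ne_zero_iff.mpr hz
  set c : ℂ := ⟪z, w⟫ / ((‖z‖ : ℂ) ^ 2) with hc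
  have hzp : ⟪z, w - c • z⟫ = 0 := by
    have hzc : (‖z‖ : ℂ) ≠ 0 := by exact_mod_cast hzn
    rw [inner_sub_right, inner_smul_right, inner_self_eq_norm_sq_to_K, hc]
    field_simp
    rw [mul_zero]; exact mul_eq_zero_of_right _ (sub_eq_zero.mpr rfl)
  set p := w - c • z with hp
  have hw' : c • z + p = w := by rw [hp]; abel
  by_cases hcz : c = 0
  · have hzw0 : ⟪z, w⟫ = 0 := by
      have h := hzp
      rw [hp, hcz, zero_smul, sub_zero] at h
      exact h
    exact mu_orth hadd hsmul hop hz hw hzw0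
  · by_cases hpz : p = 0
    · have hwcz : w = c • z := by rw [← hw', hpz, add_zero]
      rw [hwcz, nu_smul hadd hsmul, norm_smul, mul_pow, norm_sq_c]
      ring
    · have hporth : nu T p * ‖z‖ ^ 2 = nu T z * ‖p‖ ^ 2 :=
        mu_orth hadd hsmul hop hpz hz (inner_symm_zero hzp)
      have horth2 : ⟪c • z, p⟫ = 0 := by rw [inner_smul_left, hzp, mul_zero]
      have hnuw : nu T w = nu T (c • z) + nu T p := by
        rw [← hw']; exact nu_add_orth hadd hop horth2
      have hnw : ‖w‖ ^ 2 = ‖c • z‖ ^ 2 + ‖p‖ ^ 2 := by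
        rw [← hw']
        have h := norm_add_sq (𝕜 := ℂ) (c • z) p
        rw [horth2] at h
        simpa using h
      have hnsc : nu T (c • z) = (c.re ^ 2 + c.im ^ 2) * nu T z := nu_smul hadd hsmul c z
      have hnc : ‖c • z‖ ^ 2 = (c.re ^ 2 + c.im ^ 2) * ‖z‖ ^ 2 := by
        rw [norm_smul, mul_pow, norm_sq_c]
      rw [hnuw, hnw, hnsc, hnc]
      nlinarith [hporth]

theorem im_eq (hadd : ∀ x y, T (x + y) = T x + T y)
    (hsmul : ∀ (r : ℝ) (x : H), T (r • x) = r • T x)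
    (hop : ∀ x y : H, ⟪x, y⟫ = 0 → ⟪T x, T y⟫ = 0)
    {z₀ : H} (hz₀ : z₀ ≠ 0) (x y : H) :
    (⟪T x, T y⟫ : ℂ).im = (nu T z₀ / ‖z₀‖ ^ 2) * (⟪x, y⟫ : ℂ).im := by
  set L := nu T z₀ / ‖z₀‖ ^ 2 with hL
  have hz₀n : ‖z₀‖ ≠ 0 := norm_ne_zero_iff.mpr hz₀
  by_cases hx : x = 0
  · subst hx; rw [map_zero' hsmul]; simp
  · have hxn : ‖x‖ ≠ 0 := norm_ne_zero_iff.mpr hx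
    have hxc : (‖x‖ : ℂ) ≠ 0 := by exact_mod_cast hxn
    have hnux : nu T x = L * ‖x‖ ^ 2 := by
      have h := mu_const hadd hsmul hop hz₀ hx
      rw [hL]
      field_simp
      linarith [h]
    set c : ℂ := ⟪x, y⟫ / ((‖x‖ : ℂ) ^ 2) with hc
    have hxp : ⟪x, y - c • x⟫ = 0 := by
      rw [inner_sub_right, inner_smul_right, inner_self_eq_norm_sq_to_K, hc]
      field_simp
      rw [mul_zero]; exact mul_eq_zero_of_right _ (sub_eq_zero.mpr rfl)
    have hy : y = c • x + (y - c • x) := by abel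
    have hTp : ⟪T x, T (y - c • x)⟫ = 0 := hop _ _ hxp
    have hixy : (⟪x, y⟫ : ℂ) = c * ((‖x‖ : ℂ) ^ 2) := by rw [hc]; field_simp
    have hself : (⟪T x, T x⟫ : ℂ).im = 0 := inner_self_im (𝕜 := ℂ) _
    calc (⟪T x, T y⟫ : ℂ).im
        = ((⟪T x, T (c • x)⟫ : ℂ) + (⟪T x, T (y - c • x)⟫ : ℂ)).im := by
          rw [← inner_add_right, ← hadd, ← hy]
      _ = (⟪T x, T (c • x)⟫ : ℂ).im := by rw [hTp, add_zero]
      _ = c.im * nu T x := by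
          rw [mapC hadd hsmul c x, inner_add_right, inner_smul_right, inner_smul_right]
          simp [nu, hself]
          right; rw [← Complex.ofReal_pow, Complex.ofReal_im]
      _ = L * (⟪x, y⟫ : ℂ).im := by
          rw [hnux, hixy, show ((‖x‖ : ℂ)) ^ 2 = ((‖x‖ ^ 2 : ℝ) : ℂ) by push_cast; ring,
            Complex.mul_im, Complex.ofReal_re, Complex.ofReal_im]
          ring

end CharNCLAux

/-- Characterization of the failure of complex-linearity/conjugate-linearity for a
real-linear isometry `T` preserving orthogonality between complex inner product
spaces (`dim H ≥ 2`): (a) `T` is neither complex-linear nor conjugate-linear ↔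
(b) every non-zero `z` satisfies `T(iz) ∉ {i T z, -i T z}` ↔ (c) some non-zero `z`
does ↔ (d) some non-zero `x₀` has `i T(x₀) ∉ T(H)`. -/
theorem characterization_not_complexLinear_isometry_op
    {H K : Type*} [NormedAddCommGroup H] [InnerProductSpace ℂ H]
    [NormedAddCommGroup K] [InnerProductSpace ℂ K]
    (hdim : 2 ≤ Module.rank ℂ H)
    (T : H → K)
    (hadd : ∀ x y, T (x + y) = T x + T y)
    (hsmul : ∀ (r : ℝ) (x : H), T (r • x) = r • T x)
    (hiso : ∀ x, ‖T x‖ = ‖x‖)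
    (hop : ∀ x y : H, ⟪x, y⟫ = 0 → ⟪T x, T y⟫ = 0) :
    ((¬ (∀ (l : ℂ) (x : H), T (l • x) = l • T x) ∧
        ¬ (∀ (l : ℂ) (x : H), T (l • x) = (starRingEnd ℂ l) • T x)) ↔
      (∀ z : H, z ≠ 0 →
        ¬ (T (Complex.I • z) = Complex.I • T z ∨ T (Complex.I • z) = -(Complex.I • T z)))) ∧
    ((∀ z : H, z ≠ 0 →
        ¬ (T (Complex.I • z) = Complex.I • T z ∨ T (Complex.I • z) = -(Complex.I • T z))) ↔
      (∃ z : H, z ≠ 0 ∧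
        ¬ (T (Complex.I • z) = Complex.I • T z ∨ T (Complex.I • z) = -(Complex.I • T z)))) ∧
    ((∃ z : H, z ≠ 0 ∧
        ¬ (T (Complex.I • z) = Complex.I • T z ∨ T (Complex.I • z) = -(Complex.I • T z))) ↔
      (∃ x₀ : H, x₀ ≠ 0 ∧ Complex.I • T x₀ ∉ Set.range T)) := by
  classical
  -- H is nontrivial
  obtain ⟨z₀, hz₀⟩ : ∃ z : H, z ≠ 0 := by
    by_contra hcon
    push_neg at hcon
    have hsub : Subsingleton H := ⟨fun a b => by rw [hcon a, hcon b]⟩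
    rw [rank_subsingleton' ℂ H] at hdim
    exact absurd hdim (by simp)
  set L : ℝ := CharNCLAux.nu T z₀ / ‖z₀‖ ^ 2 with hLdef
  have hre : ∀ x y : H, (⟪T x, T y⟫ : ℂ).re = (⟪x, y⟫ : ℂ).re :=
    CharNCLAux.re_eq hadd hiso
  have him : ∀ x y : H, (⟪T x, T y⟫ : ℂ).im = L * (⟪x, y⟫ : ℂ).im :=
    CharNCLAux.im_eq hadd hsmul hop hz₀
  -- the inner product of T z with T (I z)
  have hTz : ∀ z : H, (⟪T z, T (Complex.I • z)⟫ : ℂ) = ((L * ‖z‖ ^ 2 : ℝ) : ℂ) * Complex.I := by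
    intro z
    have h1 : (⟪z, z⟫ : ℂ).im = 0 := inner_self_im (𝕜 := ℂ) _
    have h2 : (⟪z, z⟫ : ℂ).re = ‖z‖ ^ 2 := by simpa using inner_self_eq_norm_sq (𝕜 := ℂ) z
    apply Complex.ext
    · have hh : (⟪z, Complex.I • z⟫ : ℂ).re = 0 := by
        rw [inner_smul_right, Complex.mul_re, Complex.I_re, Complex.I_im, h1]; ring
      rw [hre, hh, Complex.mul_re, Complex.ofReal_re, Complex.ofReal_im, Complex.I_re,
        Complex.I_im]
      ring
    · have hh : (⟪z, Complex.I • z⟫ : ℂ).im = ‖z‖ ^ 2 := by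
        rw [inner_smul_right, Complex.mul_im, Complex.I_re, Complex.I_im, h1, h2]; ring
      rw [him, hh, Complex.mul_im, Complex.ofReal_re, Complex.ofReal_im, Complex.I_re,
        Complex.I_im]
      ring
  -- difference characterization
  have hInorm : ∀ z : H, ‖Complex.I • z‖ = ‖z‖ := fun z => by
    rw [norm_smul]; simp
  have hdiff : ∀ z : H,
      (⟪T (Complex.I • z) - Complex.I • T z, T (Complex.I • z) - Complex.I • T z⟫ : ℂ) =
        ((2 * (1 - L) * ‖z‖ ^ 2 : ℝ) : ℂ) := by
    intro z
    rw [inner_sub_sub_self]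
    have e1 : (⟪T (Complex.I • z), T (Complex.I • z)⟫ : ℂ) = ((‖z‖ ^ 2 : ℝ) : ℂ) := by
      rw [inner_self_eq_norm_sq_to_K, hiso, hInorm]
      norm_cast
    have e2 : (⟪Complex.I • T z, Complex.I • T z⟫ : ℂ) = ((‖z‖ ^ 2 : ℝ) : ℂ) := by
      have hone : (starRingEnd ℂ) Complex.I * Complex.I = 1 := by
        rw [Complex.conj_I]
        simp [Complex.I_mul_I]
      rw [inner_smul_left, inner_smul_right, ← mul_assoc, hone, one_mul,
        inner_self_eq_norm_sq_to_K, hiso]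
      norm_cast
    have e3 : (⟪Complex.I • T z, T (Complex.I • z)⟫ : ℂ) = ((L * ‖z‖ ^ 2 : ℝ) : ℂ) := by
      rw [inner_smul_left, hTz z, Complex.conj_I]
      linear_combination (-((L * ‖z‖ ^ 2 : ℝ) : ℂ)) * Complex.I_mul_I
    have e4 : (⟪T (Complex.I • z), Complex.I • T z⟫ : ℂ) = ((L * ‖z‖ ^ 2 : ℝ) : ℂ) := by
      rw [← inner_conj_symm, e3]
      simp
    rw [e1, e2, e3, e4]
    push_cast
    ring
  have hsumi : ∀ z : H,
      (⟪T (Complex.I • z) + Complex.I • T z, T (Complex.I • z) + Complex.I • T z⟫ : ℂ) =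
        ((2 * (1 + L) * ‖z‖ ^ 2 : ℝ) : ℂ) := by
    intro z
    rw [inner_add_add_self]
    have e1 : (⟪T (Complex.I • z), T (Complex.I • z)⟫ : ℂ) = ((‖z‖ ^ 2 : ℝ) : ℂ) := by
      rw [inner_self_eq_norm_sq_to_K, hiso, hInorm]
      norm_cast
    have e2 : (⟪Complex.I • T z, Complex.I • T z⟫ : ℂ) = ((‖z‖ ^ 2 : ℝ) : ℂ) := by
      have hone : (starRingEnd ℂ) Complex.I * Complex.I = 1 := by
        rw [Complex.conj_I]
        simp [Complex.I_mul_I]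
      rw [inner_smul_left, inner_smul_right, ← mul_assoc, hone, one_mul,
        inner_self_eq_norm_sq_to_K, hiso]
      norm_cast
    have e3 : (⟪Complex.I • T z, T (Complex.I • z)⟫ : ℂ) = ((L * ‖z‖ ^ 2 : ℝ) : ℂ) := by
      rw [inner_smul_left, hTz z, Complex.conj_I]
      linear_combination (-((L * ‖z‖ ^ 2 : ℝ) : ℂ)) * Complex.I_mul_I
    have e4 : (⟪T (Complex.I • z), Complex.I • T z⟫ : ℂ) = ((L * ‖z‖ ^ 2 : ℝ) : ℂ) := by
      rw [← inner_conj_symm, e3]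
      simp
    rw [e1, e2, e3, e4]
    push_cast
    ring
  have heq1 : ∀ z : H, T (Complex.I • z) = Complex.I • T z ↔ (1 - L) * ‖z‖ ^ 2 = 0 := by
    intro z
    rw [← sub_eq_zero, ← @inner_self_eq_zero ℂ, hdiff z]
    rw [show ((2 * (1 - L) * ‖z‖ ^ 2 : ℝ) : ℂ) = 0 ↔ (2 * (1 - L) * ‖z‖ ^ 2 : ℝ) = 0 from
      Complex.ofReal_eq_zero]
    constructor <;> intro h <;> nlinarith [h]
  have heq2 : ∀ z : H, T (Complex.I • z) = -(Complex.I • T z) ↔ (1 + L) * ‖z‖ ^ 2 = 0 := by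
    intro z
    rw [eq_neg_iff_add_eq_zero, ← @inner_self_eq_zero ℂ, hsumi z]
    rw [show ((2 * (1 + L) * ‖z‖ ^ 2 : ℝ) : ℂ) = 0 ↔ (2 * (1 + L) * ‖z‖ ^ 2 : ℝ) = 0 from
      Complex.ofReal_eq_zero]
    constructor <;> intro h <;> nlinarith [h]
  have hPiff : ∀ z : H, z ≠ 0 →
      ((T (Complex.I • z) = Complex.I • T z ∨ T (Complex.I • z) = -(Complex.I • T z)) ↔
        (L = 1 ∨ L = -1)) := by
    intro z hz
    have hz2 : (0 : ℝ) < ‖z‖ ^ 2 := pow_pos (norm_pos_iff.mpr hz) 2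
    rw [heq1 z, heq2 z]
    constructor
    · rintro (h | h)
      · left; nlinarith [h]
      · right; nlinarith [h]
    · rintro (h | h)
      · left; rw [h]; ring
      · right; rw [h]; ring
  have hlin : (∀ (l : ℂ) (x : H), T (l • x) = l • T x) ↔ L = 1 := by
    constructor
    · intro hl
      have h := (heq1 z₀).mp (hl Complex.I z₀)
      have hz2 : (0 : ℝ) < ‖z₀‖ ^ 2 := pow_pos (norm_pos_iff.mpr hz₀) 2
      nlinarith [h]
    · intro hL1 l x
      have hIz : ∀ z : H, T (Complex.I • z) = Complex.I • T z :=
        fun z => (heq1 z).mpr (by rw [hL1]; ring)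
      rw [CharNCLAux.mapC hadd hsmul l x, hIz x]
      exact (CharNCLAux.smul_decompC l (T x)).symm
  have hconj : (∀ (l : ℂ) (x : H), T (l • x) = (starRingEnd ℂ l) • T x) ↔ L = -1 := by
    constructor
    · intro hl
      have h0 := hl Complex.I z₀
      rw [Complex.conj_I] at h0
      have h0' : T (Complex.I • z₀) = -(Complex.I • T z₀) := by rw [h0, neg_smul]
      have h := (heq2 z₀).mp h0'
      have hz2 : (0 : ℝ) < ‖z₀‖ ^ 2 := pow_pos (norm_pos_iff.mpr hz₀) 2
      nlinarith [h]
    · intro hL1 l x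
      have hIz : ∀ z : H, T (Complex.I • z) = -(Complex.I • T z) :=
        fun z => (heq2 z).mpr (by rw [hL1]; ring)
      rw [CharNCLAux.mapC hadd hsmul l x, hIz x]
      have hd := CharNCLAux.smul_decompC (starRingEnd ℂ l) (T x)
      rw [hd]
      simp [Complex.conj_re, Complex.conj_im, neg_smul, smul_neg]
  refine ⟨?_, ?_, ?_⟩
  · -- (a) ↔ (b)
    constructor
    · rintro ⟨hnl, hnc⟩ z hz
      have hL1 : L ≠ 1 := fun h => hnl (hlin.mpr h)
      have hL2 : L ≠ -1 := fun h => hnc (hconj.mpr h)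
      rw [hPiff z hz]
      rintro (h | h)
      · exact hL1 h
      · exact hL2 h
    · intro hb
      have hnp := hb z₀ hz₀
      rw [hPiff z₀ hz₀] at hnp
      exact ⟨fun hl => hnp (Or.inl (hlin.mp hl)), fun hc => hnp (Or.inr (hconj.mp hc))⟩
  · -- (b) ↔ (c)
    constructor
    · intro hb
      exact ⟨z₀, hz₀, hb z₀ hz₀⟩
    · rintro ⟨z, hz, hznp⟩ z' hz'
      rw [hPiff z' hz']
      rw [hPiff z hz] at hznp
      exact hznp
  · -- (c) ↔ (d)
    constructor
    · rintro ⟨z, hz, hznp⟩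
      rw [hPiff z hz] at hznp
      push_neg at hznp
      obtain ⟨hL1, hL2⟩ := hznp
      refine ⟨z₀, hz₀, ?_⟩
      rintro ⟨y, hy⟩
      -- hy : T y = Complex.I • T z₀
      have keyC : ∀ x : H, (⟪T x, T y⟫ : ℂ) = Complex.I * (⟪T x, T z₀⟫ : ℂ) := fun x => by
        rw [hy, inner_smul_right]
      have E1 : ∀ x : H, (⟪x, y⟫ : ℂ).re = -(L * (⟪x, z₀⟫ : ℂ).im) := by
        intro x
        have h := congrArg Complex.re (keyC x)
        simp only [Complex.mul_re, Complex.I_re, Complex.I_im] at h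
        rw [hre x y, him x z₀] at h
        rw [h]; ring
      have E2 : ∀ x : H, L * (⟪x, y⟫ : ℂ).im = (⟪x, z₀⟫ : ℂ).re := by
        intro x
        have h := congrArg Complex.im (keyC x)
        simp only [Complex.mul_im, Complex.I_re, Complex.I_im] at h
        rw [him x y, hre x z₀] at h
        rw [h]; ring
      set n : ℝ := ‖z₀‖ ^ 2 with hn
      have hnpos : (0 : ℝ) < n := pow_pos (norm_pos_iff.mpr hz₀) 2
      set s : ℝ := (⟪z₀, y⟫ : ℂ).im with hs
      -- e1 : L * s = n
      have e1 : L * s = n := by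
        have h := E2 z₀
        rwa [show (⟪z₀, z₀⟫ : ℂ).re = n by simpa using inner_self_eq_norm_sq (𝕜 := ℂ) z₀] at h
      -- ‖y‖² = n
      have hyz : (⟪y, z₀⟫ : ℂ).im = -s := by
        rw [← inner_conj_symm, Complex.conj_im, hs]
      have e2 : ‖y‖ ^ 2 = n := by
        have h := E1 y
        rw [show (⟪y, y⟫ : ℂ).re = ‖y‖ ^ 2 by simpa using inner_self_eq_norm_sq (𝕜 := ℂ) y,
          hyz] at h
        rw [h]
        rw [← e1]; ring
      -- e3 : s = L * n
      have e3 : s = L * n := by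
        have h := E2 (Complex.I • y)
        have hA : (⟪Complex.I • y, y⟫ : ℂ).im = -(‖y‖ ^ 2) := by
          rw [inner_smul_left, Complex.conj_I,
            show (⟪y, y⟫ : ℂ) = ((‖y‖ ^ 2 : ℝ) : ℂ) from by
              exact_mod_cast inner_self_eq_norm_sq_to_K y]
          simp [← Complex.ofReal_pow]
        have hB : (⟪Complex.I • y, z₀⟫ : ℂ).re = (⟪y, z₀⟫ : ℂ).im := by
          rw [inner_smul_left, Complex.conj_I]
          simp
        rw [hA, hB, hyz, e2] at h
        nlinarith [h]
      -- contradiction : L² = 1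
      have hL2eq : (L - 1) * (L + 1) = 0 := by
        have : n = L * (L * n) := by rw [← e3, e1]
        have h2 : (L * L - 1) * n = 0 := by nlinarith [this]
        have h3 : L * L - 1 = 0 := by
          rcases mul_eq_zero.mp h2 with h | h
          · exact h
          · exact absurd h (ne_of_gt hnpos)
        nlinarith [h3]
      rcases mul_eq_zero.mp hL2eq with h | h
      · exact hL1 (by linarith)
      · exact hL2 (by linarith)
    · rintro ⟨x₀, hx₀, hnotin⟩
      by_contra hc
      push_neg at hc
      have hP := hc z₀ hz₀
      rcases (hPiff z₀ hz₀).mp hP with hL | hL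
      · exact hnotin ⟨Complex.I • x₀, (heq1 x₀).mpr (by rw [hL]; ring)⟩
      · refine hnotin ⟨-(Complex.I • x₀), ?_⟩
        rw [CharNCLAux.map_neg' hsmul, (heq2 x₀).mpr (by rw [hL]; ring), neg_neg]
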